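/- Let H be an infinite-dimensional complex Hilbert space and f : G_∞(H) → G_∞(H) a map such that for all X, Y in G_∞(H) there exists a linear isometry L : H → H with {f(X), f(Y)} = {L(X), L(Y)}. Then f preserves inclusion in both directions: for all X, Y in G_∞(H), X ⊆ Y if and only if f(X) ⊆ f(Y). -/

import Mathlib

variable {H : Type} [NormedAddCommGroup H] [InnerProductSpace ℂ H] [CompleteSpace H]

/-- Membership in the Grassmannian `G_∞(H)`: closed subspaces whose dimension and
codimension are both infinite. -/
def inGinf (X : Submodule ℂ H) : Prop :=
  IsClosed (X : Set H) ∧ ¬ FiniteDimensional ℂ X ∧ ¬ FiniteDimensional ℂ Xᗮ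

/-- `f` sends every pair of subspaces of `G_∞(H)` to an equivalent pair: some linear
isometry of `H` maps one (unordered) pair onto the other. -/
def SendsPairsToEquiv (f : Submodule ℂ H → Submodule ℂ H) : Prop :=
  ∀ X Y : Submodule ℂ H, inGinf X → inGinf Y →
    ∃ L : H →ₗᵢ[ℂ] H,
      ({f X, f Y} : Set (Submodule ℂ H)) = {X.map L.toLinearMap, Y.map L.toLinearMap}

/-- Orthogonality of two submodules. -/
def Orth (A B : Submodule ℂ H) : Prop :=
  ∀ a ∈ A, ∀ b ∈ B, (inner ℂ a b : ℂ) = 0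

lemma orth_symm {A B : Submodule ℂ H} (h : Orth A B) : Orth B A := by
  intro b hb a ha
  rw [inner_eq_zero_symm]
  exact h a ha b hb

lemma orth_map_iff (L : H →ₗᵢ[ℂ] H) (A B : Submodule ℂ H) :
    Orth (A.map L.toLinearMap) (B.map L.toLinearMap) ↔ Orth A B := by
  constructor
  · intro h a ha b hb
    have := h (L a) ⟨a, ha, rfl⟩ (L b) ⟨b, hb, rfl⟩
    rwa [L.inner_map_map] at this
  · rintro h _ ⟨a, ha, rfl⟩ _ ⟨b, hb, rfl⟩
    show (inner ℂ (L a) (L b) : ℂ) = 0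
    rw [L.inner_map_map]
    exact h a ha b hb

lemma orth_pres {f : Submodule ℂ H → Submodule ℂ H} (hpair : SendsPairsToEquiv f)
    {X Z : Submodule ℂ H} (hX : inGinf X) (hZ : inGinf Z) :
    Orth (f X) (f Z) ↔ Orth X Z := by
  obtain ⟨L, hL⟩ := hpair X Z hX hZ
  rcases Set.pair_eq_pair_iff.mp hL with ⟨h1, h2⟩ | ⟨h1, h2⟩
  · rw [h1, h2, orth_map_iff]
  · rw [h1, h2, orth_map_iff]
    exact ⟨orth_symm, orth_symm⟩

lemma ginf_orth {X : Submodule ℂ H} (hX : inGinf X) : inGinf Xᗮ := by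
  haveI : CompleteSpace X := hX.1.completeSpace_coe
  refine ⟨Submodule.isClosed_orthogonal X, hX.2.2, ?_⟩
  rw [Submodule.orthogonal_orthogonal X]
  exact hX.2.1

lemma orth_orth_self {X : Submodule ℂ H} : Orth Xᗮ X := by
  intro z hz x hx
  exact (Submodule.mem_orthogonal' X z).mp hz x hx

lemma le_of_orth_orth {X Y : Submodule ℂ H} (hX : inGinf X) (h : Orth Xᗮ Y) : Y ≤ X := by
  haveI : CompleteSpace X := hX.1.completeSpace_coe
  intro y hy
  rw [← Submodule.orthogonal_orthogonal X]
  exact (Submodule.mem_orthogonal Xᗮ y).mpr (fun u hu => h u hu y hy)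

/-- a map of `G_∞(H)` sending every pair of subspaces to an equivalent
pair preserves inclusion in both directions. -/
theorem stmt6 (hH : ¬ FiniteDimensional ℂ H)
    (f : Submodule ℂ H → Submodule ℂ H)
    (hf : ∀ X, inGinf X → inGinf (f X))
    (hpair : SendsPairsToEquiv f) :
    ∀ X Y : Submodule ℂ H, inGinf X → inGinf Y → (X ≤ Y ↔ f X ≤ f Y) := by
  intro X Y hX hY
  by_cases hXY : X = Y
  · subst hXY; simp
  constructor
  · intro hle
    obtain ⟨L, hL⟩ := hpair X Y hX hY
    rcases Set.pair_eq_pair_iff.mp hL with ⟨h1, h2⟩ | ⟨h1, h2⟩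
    · rw [h1, h2]
      exact Submodule.map_mono hle
    · -- f X = Y.map L, f Y = X.map L : derive a contradiction
      exfalso
      have hfYfX : f Y ≤ f X := by
        rw [h1, h2]; exact Submodule.map_mono hle
      have hZX : Orth Xᗮ X := orth_orth_self
      have h1' : Orth (f Xᗮ) (f X) := (orth_pres hpair (ginf_orth hX) hX).mpr hZX
      have h2' : Orth (f Xᗮ) (f Y) := fun a ha b hb => h1' a ha b (hfYfX hb)
      have hZY : Orth Xᗮ Y := (orth_pres hpair (ginf_orth hX) hY).mp h2'
      exact hXY (le_antisymm hle (le_of_orth_orth hX hZY))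
  · intro hle
    obtain ⟨L, hL⟩ := hpair X Y hX hY
    rcases Set.pair_eq_pair_iff.mp hL with ⟨h1, h2⟩ | ⟨h1, h2⟩
    · rw [h1, h2] at hle
      exact (Submodule.map_le_map_iff_of_injective L.injective X Y).mp hle
    · -- f X = Y.map L, f Y = X.map L
      have hZY : Orth Yᗮ Y := orth_orth_self
      have h1' : Orth (f Yᗮ) (f Y) := (orth_pres hpair (ginf_orth hY) hY).mpr hZY
      have h2' : Orth (f Yᗮ) (f X) := fun a ha b hb => h1' a ha b (hle hb)
      have hZX : Orth Yᗮ X := (orth_pres hpair (ginf_orth hY) hX).mp h2'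
      exact le_of_orth_orth hY hZX
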